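/- Let Q = {1,…,n} with n ≥ 3, and define W_bf(n) as the set of transformations t of Q with 1 ∉ rng(t), (n−1)t = nt = n, and such that for all distinct i,j ∈ Q either it = jt = n or it ≠ jt. Then W_bf(n) is a semigroup under composition, and its cardinality equals Σ_{k=0}^{n−2} C(n−2,k)² (n−2−k)!. -/

import Mathlib

open Finset


/-- `t` belongs to `W_bf(n)`: states `{1,…,n}` are encoded as `Fin n` (state `i` ↦ index
`i-1`); `1 ∉ rng t`, `(n-1) t = n t = n`, and for all distinct `i, j` either
`i t = j t = n` or `i t ≠ j t`. -/
def IsWbf (n : ℕ) (t : Fin n → Fin n) : Prop :=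
  (∀ q : Fin n, (t q).val ≠ 0) ∧
  (∀ q : Fin n, q.val = n - 2 ∨ q.val = n - 1 → (t q).val = n - 1) ∧
  (∀ i j : Fin n, i ≠ j →
    ((t i).val = n - 1 ∧ (t j).val = n - 1) ∨ t i ≠ t j)

theorem sigma_emb_eq {α β : Type*} {s s' : Finset α} (e : {x // x ∈ s} ↪ β)
    (e' : {x // x ∈ s'} ↪ β) (h : s = s')
    (h2 : ∀ a (ha : a ∈ s) (ha' : a ∈ s'), e ⟨a, ha⟩ = e' ⟨a, ha'⟩) :
    (⟨s, e⟩ : Σ u : Finset α, {x // x ∈ u} ↪ β) = ⟨s', e'⟩ := by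
  subst h
  simp only [Sigma.mk.inj_iff, heq_eq_eq, true_and]
  ext ⟨a, ha⟩
  exact h2 a ha ha

def wbfFwd (n : ℕ) (hn : 3 ≤ n) (t : {t : Fin n → Fin n // IsWbf n t}) :
    Σ s : Finset (Fin (n - 2)), {x // x ∈ s} ↪ Fin (n - 2) := by
  refine ⟨Finset.univ.filter
      (fun q : Fin (n - 2) => (t.1 (Fin.castLE (by omega) q)).val ≠ n - 1), ⟨fun x =>
    ⟨(t.1 (Fin.castLE (by omega) x.1)).val - 1, ?_⟩, ?_⟩⟩
  · have h1 := t.2.1 (Fin.castLE (by omega) x.1)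
    have h2 := x.2
    simp only [mem_filter, mem_univ, true_and] at h2
    have := (t.1 (Fin.castLE (by omega) x.1)).isLt
    omega
  · rintro ⟨x, hx⟩ ⟨y, hy⟩ hxy
    simp only [mem_filter, mem_univ, true_and] at hx hy
    simp only [Fin.mk.injEq] at hxy
    have h1x := t.2.1 (Fin.castLE (by omega) x)
    have h1y := t.2.1 (Fin.castLE (by omega) y)
    have heq : t.1 (Fin.castLE (by omega) x) = t.1 (Fin.castLE (by omega) y) := by
      apply Fin.ext; omega
    have : x = y := by
      by_contra hne
      have hne' : (Fin.castLE (show n - 2 ≤ n by omega) x) ≠ Fin.castLE (by omega) y := by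
        intro h
        apply hne
        apply Fin.ext
        have h2 := congrArg Fin.val h
        exact h2
      rcases t.2.2.2 _ _ hne' with ⟨ha, _⟩ | hne2
      · exact hx ha
      · exact hne2 heq
    exact Subtype.ext this

def wbfBwd (n : ℕ) (hn : 3 ≤ n)
    (p : Σ s : Finset (Fin (n - 2)), {x // x ∈ s} ↪ Fin (n - 2)) :
    Fin n → Fin n := fun q =>
  if h : q.val < n - 2 then
    if hm : (⟨q.val, h⟩ : Fin (n - 2)) ∈ p.1 then
      ⟨(p.2 ⟨⟨q.val, h⟩, hm⟩).val + 1, by have := (p.2 ⟨⟨q.val, h⟩, hm⟩).isLt; omega⟩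
    else ⟨n - 1, by omega⟩
  else ⟨n - 1, by omega⟩

theorem wbfBwd_inj (n : ℕ) (hn : 3 ≤ n)
    (p : Σ s : Finset (Fin (n - 2)), {x // x ∈ s} ↪ Fin (n - 2)) (i j : Fin n)
    (hne : (wbfBwd n hn p i).val ≠ n - 1)
    (heq : wbfBwd n hn p i = wbfBwd n hn p j) : i = j := by
  unfold wbfBwd at hne heq
  split_ifs at hne heq with h1 h2 h3 h4 h5 h6
  all_goals simp only [Fin.mk.injEq] at heq hne
  all_goals try (exact absurd rfl hne)
  · have hval : (p.2 ⟨⟨i.val, h1⟩, h2⟩ : Fin (n - 2)) = p.2 ⟨⟨j.val, h3⟩, h4⟩ :=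
      Fin.ext (by omega)
    have := p.2.injective hval
    apply Fin.ext
    exact congrArg (fun x => (Subtype.val x).val) this
  · have := (p.2 ⟨⟨i.val, h1⟩, h2⟩).isLt; omega
  · have := (p.2 ⟨⟨i.val, h1⟩, h2⟩).isLt; omega

theorem wbfBwd_isWbf (n : ℕ) (hn : 3 ≤ n)
    (p : Σ s : Finset (Fin (n - 2)), {x // x ∈ s} ↪ Fin (n - 2)) :
    IsWbf n (wbfBwd n hn p) := by
  refine ⟨fun q => ?_, fun q hq => ?_, fun i j hij => ?_⟩
  · unfold wbfBwd; split_ifs <;> simp <;> omega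
  · unfold wbfBwd; split_ifs with h h2
    · omega
    · omega
    · rfl
  · by_cases hvi : (wbfBwd n hn p i).val = n - 1
    · by_cases hvj : (wbfBwd n hn p j).val = n - 1
      · exact Or.inl ⟨hvi, hvj⟩
      · right; intro heq
        exact hij (wbfBwd_inj n hn p j i hvj heq.symm).symm
    · right; intro heq
      exact hij (wbfBwd_inj n hn p i j hvi heq)

noncomputable def wbfEquiv (n : ℕ) (hn : 3 ≤ n) :
    {t : Fin n → Fin n // IsWbf n t} ≃
      Σ s : Finset (Fin (n - 2)), {x // x ∈ s} ↪ Fin (n - 2) where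
  toFun := wbfFwd n hn
  invFun p := ⟨wbfBwd n hn p, wbfBwd_isWbf n hn p⟩
  left_inv := by
    rintro ⟨t, ht⟩
    apply Subtype.ext
    funext q
    show wbfBwd n hn (wbfFwd n hn ⟨t, ht⟩) q = t q
    unfold wbfBwd wbfFwd
    by_cases h : q.val < n - 2
    · rw [dif_pos h]
      have hcast : Fin.castLE (show n - 2 ≤ n by omega) (⟨q.val, h⟩ : Fin (n - 2)) = q :=
        Fin.ext rfl
      by_cases hm : (t q).val ≠ n - 1
      · rw [dif_pos]
        · apply Fin.ext
          simp only [Function.Embedding.coeFn_mk, hcast]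
          show (t (Fin.castLE _ ⟨q.val, h⟩)).val - 1 + 1 = (t q).val
          rw [hcast]
          have := ht.1 q
          omega
        · simp only [mem_filter, mem_univ, true_and, hcast]
          exact hm
      · rw [dif_neg]
        · apply Fin.ext
          simp only
          omega
        · simp only [mem_filter, mem_univ, true_and, hcast]
          exact hm
    · rw [dif_neg h]
      have := ht.2.1 q (by have := q.isLt; omega)
      exact Fin.ext (by simp; omega)
  right_inv := by
    rintro ⟨s, e⟩
    show wbfFwd n hn ⟨wbfBwd n hn ⟨s, e⟩, _⟩ = ⟨s, e⟩
    have key : ∀ (a : Fin (n - 2)),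
        wbfBwd n hn ⟨s, e⟩ (Fin.castLE (by omega) a) =
          if hm : a ∈ s then ⟨(e ⟨a, hm⟩).val + 1, by have := (e ⟨a, hm⟩).isLt; omega⟩
          else ⟨n - 1, by omega⟩ := by
      intro a
      unfold wbfBwd
      have ha : (Fin.castLE (show n - 2 ≤ n by omega) a).val < n - 2 := a.isLt
      rw [dif_pos ha]
      rfl
    apply sigma_emb_eq
    · ext a
      simp only [mem_filter, mem_univ, true_and, key a]
      by_cases hm : a ∈ s
      · simp only [dif_pos hm]
        have := (e ⟨a, hm⟩).isLt
        constructor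
        · intro; exact hm
        · intro; simp; omega
      · simp only [dif_neg hm]
        constructor
        · intro h; exact absurd rfl h
        · intro h; exact absurd h hm
    · intro a ha ha'
      show (⟨(wbfBwd n hn ⟨s, e⟩ (Fin.castLE (by omega) a)).val - 1, _⟩ : Fin (n - 2)) =
        e ⟨a, ha'⟩
      apply Fin.ext
      simp only [key a, dif_pos ha']
      simp

/-- For `n ≥ 3`, `W_bf(n)` is closed under composition and has cardinality
`Σ_{k=0}^{n-2} C(n-2,k)² · (n-2-k)!`. -/
theorem statement12 (n : ℕ) (hn : 3 ≤ n) :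
    (∀ s t : Fin n → Fin n, IsWbf n s → IsWbf n t → IsWbf n (t ∘ s)) ∧
    Nat.card {t : Fin n → Fin n // IsWbf n t} =
      ∑ k ∈ Finset.range (n - 1), ((n - 2).choose k) ^ 2 * Nat.factorial (n - 2 - k) := by
  constructor
  · rintro s t ⟨hs1, hs2, hs3⟩ ⟨ht1, ht2, ht3⟩
    refine ⟨fun q => ht1 (s q), fun q hq => ?_, fun i j hij => ?_⟩
    · have := hs2 q hq
      exact ht2 (s q) (Or.inr this)
    · simp only [Function.comp_apply]
      by_cases hss : s i = s j
      · have hval : (s i).val = n - 1 := by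
          rcases hs3 i j hij with ⟨h, _⟩ | h
          · exact h
          · exact absurd hss h
        have h2 := ht2 (s i) (Or.inr hval)
        left
        exact ⟨h2, by rw [← hss]; exact h2⟩
      · rcases ht3 (s i) (s j) hss with ⟨h1, h2⟩ | h
        · left; exact ⟨h1, h2⟩
        · right; exact h
  · rw [Nat.card_congr (wbfEquiv n hn)]
    rw [Nat.card_eq_fintype_card, Fintype.card_sigma]
    have hcard : ∀ s : Finset (Fin (n - 2)),
        Fintype.card ({x // x ∈ s} ↪ Fin (n - 2)) = (n - 2).descFactorial s.card := by
      intro s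
      rw [Fintype.card_embedding_eq, Fintype.card_coe, Fintype.card_fin]
    simp_rw [hcard]
    have hstep : ∑ s : Finset (Fin (n - 2)), (n - 2).descFactorial s.card =
        ∑ k ∈ Finset.range (n - 1), (n - 2).choose k * (n - 2).descFactorial k := by
      rw [← Finset.powerset_univ, Finset.powerset_card_disjiUnion]
      erw [Finset.sum_disjiUnion]
      have hu : (Finset.univ : Finset (Fin (n - 2))).card = n - 2 := by simp
      rw [hu, show n - 2 + 1 = n - 1 by omega]
      apply Finset.sum_congr rfl
      intro k hk
      rw [Finset.sum_congr rfl (fun s hs => by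
        rw [(Finset.mem_powersetCard.1 hs).2]), Finset.sum_const,
        Finset.card_powersetCard, hu, smul_eq_mul]
    rw [hstep]
    rw [show n - 1 = (n - 2) + 1 by omega]
    conv_lhs => rw [← Finset.sum_range_reflect]
    apply Finset.sum_congr rfl
    intro k hk
    rw [Finset.mem_range] at hk
    have hk' : k ≤ n - 2 := by omega
    rw [show n - 2 + 1 - 1 - k = n - 2 - k by omega]
    rw [Nat.descFactorial_eq_factorial_mul_choose, Nat.choose_symm hk']
    ring
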